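/- For every integer n ≥ 2 with distinct prime divisors p₁, p₂, …, p_m, the difference T*(n) = T(n) − T(n−1) satisfies the inclusion–exclusion formula T*(n) = Σ_{i} T(n/p_i) − Σ_{i<j} T(n/(p_i p_j)) + ⋯ + (−1)^{m−1} T(n/(p₁p₂⋯p_m)); equivalently, T(n) − T(n−1) = Σ_{d | n, d > 1, d squarefree} (−1)^{ω(d)+1} T(n/d), where ω(d) is the number of distinct prime factors of d. -/

import Mathlib

/-- `f (a₁,…,a_k)` defined by `f(a₁) = a₁`, `f(a₁,…,a_{i+1}) = (f(a₁,…,a_i) + 1) · a_{i+1}`. -/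
def f (l : List ℕ) : ℕ := l.foldl (fun acc a => (acc + 1) * a) 0

/-- `T n` is the number of nonempty finite sequences of positive integers with `f A = n`,
with the additional convention `T 0 = 1`. -/
noncomputable def T : ℕ → ℕ
  | 0 => 1
  | n + 1 => Nat.card {l : List ℕ // l ≠ [] ∧ (∀ a ∈ l, 0 < a) ∧ f l = n + 1}

lemma foldl_ge (l : List ℕ) (acc : ℕ) (h : ∀ a ∈ l, 0 < a) :
    acc + l.length ≤ l.foldl (fun acc a => (acc + 1) * a) acc := by
  induction l generalizing acc with
  | nil => simp
  | cons b t ih =>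
    simp only [List.foldl_cons, List.length_cons]
    have hb : 1 ≤ b := h b (.head _)
    have h1 := ih ((acc + 1) * b) (fun a ha => h a (.tail _ ha))
    have h2 : acc + 1 ≤ (acc + 1) * b := Nat.le_mul_of_pos_right _ hb
    omega

lemma mem_le_foldl (l : List ℕ) (acc : ℕ) (h : ∀ a ∈ l, 0 < a) :
    ∀ a ∈ l, a ≤ l.foldl (fun acc a => (acc + 1) * a) acc := by
  induction l generalizing acc with
  | nil => simp
  | cons b t ih =>
    intro a ha
    simp only [List.foldl_cons]
    rcases List.mem_cons.mp ha with rfl | ha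
    · have h1 := foldl_ge t ((acc + 1) * a) (fun x hx => h x (.tail _ hx))
      have hb : a ≤ (acc + 1) * a := Nat.le_mul_of_pos_left a (Nat.succ_pos acc)
      omega
    · exact ih ((acc + 1) * b) (fun x hx => h x (.tail _ hx)) a ha

lemma length_le_f (l : List ℕ) (h : ∀ a ∈ l, 0 < a) : l.length ≤ f l := by
  simpa [f] using foldl_ge l 0 h

lemma mem_le_f (l : List ℕ) (h : ∀ a ∈ l, 0 < a) : ∀ a ∈ l, a ≤ f l :=
  mem_le_foldl l 0 h

lemma finite_P (k : ℕ) : {l : List ℕ | (∀ a ∈ l, 0 < a) ∧ f l = k}.Finite := by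
  have h1 : {l : List (Fin (k + 1)) | l.length ≤ k}.Finite := List.finite_length_le _ k
  have h2 : ((List.map (Fin.val (n := k + 1))) '' {l | l.length ≤ k}).Finite := h1.image _
  refine h2.subset ?_
  rintro l ⟨hpos, hfl⟩
  have hlen : l.length ≤ k := hfl ▸ length_le_f l hpos
  have hmem : ∀ a ∈ l, a < k + 1 := fun a ha =>
    Nat.lt_succ_of_le (hfl ▸ mem_le_f l hpos a ha)
  refine ⟨l.attach.map (fun x => (⟨x.1, hmem x.1 x.2⟩ : Fin (k + 1))), ?_, ?_⟩
  · simpa using hlen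
  · simp [List.map_map, Function.comp]

noncomputable def F (k : ℕ) : Finset (List ℕ) := (finite_P k).toFinset

lemma mem_F {k : ℕ} {l : List ℕ} : l ∈ F k ↔ (∀ a ∈ l, 0 < a) ∧ f l = k := by
  simp [F, Set.Finite.mem_toFinset]

lemma f_pos (l : List ℕ) (hne : l ≠ []) (hpos : ∀ a ∈ l, 0 < a) : 0 < f l := by
  have h1 := length_le_f l hpos
  have h2 : 0 < l.length := List.length_pos_iff.mpr hne
  omega

lemma getLastD_eq_getLast (l : List ℕ) (h : l ≠ []) : l.getLastD 1 = l.getLast h := by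
  cases l with
  | nil => exact absurd rfl h
  | cons b t => rw [List.getLast_eq_getLastD, List.getLastD_cons]

lemma T_eq_card (k : ℕ) : T k = (F k).card := by
  cases k with
  | zero =>
    have : F 0 = {[]} := by
      ext l
      simp only [mem_F, Finset.mem_singleton]
      constructor
      · rintro ⟨hpos, hfl⟩
        by_contra hne
        have := f_pos l hne hpos
        omega
      · rintro rfl; exact ⟨by simp, rfl⟩
    simp [T, this]
  | succ n =>
    have hset : {l : List ℕ | l ≠ [] ∧ (∀ a ∈ l, 0 < a) ∧ f l = n + 1} =
        {l : List ℕ | (∀ a ∈ l, 0 < a) ∧ f l = n + 1} := by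
      ext l
      constructor
      · rintro ⟨_, h⟩; exact h
      · rintro ⟨hpos, hfl⟩
        refine ⟨?_, hpos, hfl⟩
        rintro rfl
        simp [f] at hfl
    have hiff : ∀ l : List ℕ, (l ≠ [] ∧ (∀ a ∈ l, 0 < a) ∧ f l = n + 1) ↔
        ((∀ a ∈ l, 0 < a) ∧ f l = n + 1) := fun l => by
      constructor
      · rintro ⟨_, h⟩; exact h
      · rintro ⟨hpos, hfl⟩
        refine ⟨?_, hpos, hfl⟩
        rintro rfl
        simp [f] at hfl
    calc Nat.card {l : List ℕ // l ≠ [] ∧ (∀ a ∈ l, 0 < a) ∧ f l = n + 1}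
        = Nat.card {l : List ℕ // (∀ a ∈ l, 0 < a) ∧ f l = n + 1} :=
          Nat.card_congr (Equiv.subtypeEquivRight hiff)
      _ = ({l : List ℕ | (∀ a ∈ l, 0 < a) ∧ f l = n + 1}).ncard :=
          Nat.card_coe_set_eq _
      _ = (F (n + 1)).card := Set.ncard_eq_toFinset_card _ (finite_P (n + 1))

lemma f_concat (l : List ℕ) (a : ℕ) : f (l ++ [a]) = (f l + 1) * a := by
  simp [f, List.foldl_append]

lemma T_rec (m : ℕ) (hm : 1 ≤ m) : T m = ∑ d ∈ m.divisors, T (d - 1) := by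
  rw [T_eq_card]
  rw [Finset.card_eq_sum_card_fiberwise (f := fun l => l.getLastD 1) (t := m.divisors) ?hmem]
  case hmem =>
    intro l hl
    rw [Finset.mem_coe, mem_F] at hl
    obtain ⟨hpos, hfl⟩ := hl
    have hne : l ≠ [] := by
      rintro rfl; simp [f] at hfl; omega
    dsimp only
    rw [getLastD_eq_getLast l hne, Finset.mem_coe, Nat.mem_divisors]
    refine ⟨?_, by omega⟩
    rw [← hfl]
    conv_rhs => rw [← List.dropLast_append_getLast hne]
    rw [f_concat]
    exact dvd_mul_left _ _
  rw [← Nat.sum_div_divisors m (fun d => T (d - 1))]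
  refine Finset.sum_congr rfl ?_
  intro a ha
  have ha' := Nat.mem_divisors.mp ha
  have hapos : 0 < a := Nat.pos_of_mem_divisors ha
  have hdivpos : 0 < m / a := Nat.div_pos (Nat.le_of_dvd (by omega) ha'.1) hapos
  rw [T_eq_card]
  refine Finset.card_nbij' (fun l => l.dropLast) (fun l => l ++ [a]) ?_ ?_ ?_ ?_
  · -- maps into
    intro l hl
    dsimp only
    simp only [Finset.mem_coe, Finset.mem_filter] at hl
    obtain ⟨hl, hlast⟩ := hl
    rw [mem_F] at hl
    obtain ⟨hpos, hfl⟩ := hl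
    have hne : l ≠ [] := by rintro rfl; simp [f] at hfl; omega
    rw [getLastD_eq_getLast l hne] at hlast
    rw [Finset.mem_coe, mem_F]
    constructor
    · exact fun x hx => hpos x (List.dropLast_sublist l |>.mem hx)
    · have heq : (f l.dropLast + 1) * a = m := by
        rw [← f_concat, ← hlast, List.dropLast_append_getLast hne, hfl]
      have hda : m / a = f l.dropLast + 1 := by
        rw [← heq, Nat.mul_div_cancel _ hapos]
      omega
  · -- inverse maps into
    intro l hl
    dsimp only
    rw [Finset.mem_coe, mem_F] at hl
    obtain ⟨hpos, hfl⟩ := hl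
    simp only [Finset.mem_coe, Finset.mem_filter]
    refine ⟨?_, ?_⟩
    · rw [mem_F]
      constructor
      · intro x hx
        rcases List.mem_append.mp hx with h | h
        · exact hpos x h
        · simp at h; omega
      · rw [f_concat, hfl]
        have h1 : m / a - 1 + 1 = m / a := by omega
        rw [h1, Nat.div_mul_cancel ha'.1]
    · exact List.getLastD_concat
  · -- left inverse
    intro l hl
    dsimp only
    simp only [Finset.mem_coe, Finset.mem_filter] at hl
    obtain ⟨hl, hlast⟩ := hl
    rw [mem_F] at hl
    obtain ⟨hpos, hfl⟩ := hl
    have hne : l ≠ [] := by rintro rfl; simp [f] at hfl; omega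
    rw [getLastD_eq_getLast l hne] at hlast
    conv_rhs => rw [← List.dropLast_append_getLast hne]
    rw [hlast]
  · -- right inverse
    intro l _
    dsimp only
    exact List.dropLast_concat

open ArithmeticFunction
open scoped ArithmeticFunction.Moebius

theorem Tstar_inclusion_exclusion (n : ℕ) (hn : 2 ≤ n) :
    (T n : ℤ) - T (n - 1) =
      ∑ d ∈ n.divisors.filter (fun d => 1 < d ∧ Squarefree d),
        (-1 : ℤ) ^ (d.primeFactors.card + 1) * (T (n / d) : ℤ) := by
  classical
  have hinv := (ArithmeticFunction.sum_eq_iff_sum_mul_moebius_eq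
      (R := ℤ) (f := fun d => (T (d - 1) : ℤ)) (g := fun n => (T n : ℤ))).mp ?_ n (by omega)
  swap
  · intro m hm
    exact_mod_cast congrArg (Nat.cast (R := ℤ)) (T_rec m hm).symm
  simp only [Int.cast_id] at hinv
  rw [Nat.sum_divisorsAntidiagonal
      (f := fun d e => (μ d : ℤ) * (T e : ℤ))] at hinv
  -- hinv : ∑ d in n.divisors, μ d * T (n / d) = T (n - 1)
  have h1 : (1 : ℕ) ∈ n.divisors := Nat.one_mem_divisors.mpr (by omega)
  rw [← Finset.add_sum_erase _ _ h1] at hinv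
  simp only [ArithmeticFunction.moebius_apply_one, Nat.div_one, Int.cast_one, one_mul] at hinv
  have key : (T n : ℤ) - T (n - 1) =
      ∑ d ∈ n.divisors.erase 1, (-(μ d : ℤ)) * (T (n / d) : ℤ) := by
    have hS : ∑ d ∈ n.divisors.erase 1, (-(μ d : ℤ)) * (T (n / d) : ℤ) =
        -∑ d ∈ n.divisors.erase 1, (μ d : ℤ) * (T (n / d) : ℤ) := by
      rw [← Finset.sum_neg_distrib]
      exact Finset.sum_congr rfl fun d _ => (neg_mul _ _)
    rw [hS]
    linarith [hinv]
  rw [key]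
  rw [← Finset.sum_subset (s₁ := n.divisors.filter (fun d => 1 < d ∧ Squarefree d))
      (s₂ := n.divisors.erase 1) ?hsub ?hzero]
  · refine Finset.sum_congr rfl ?_
    intro d hd
    simp only [Finset.mem_filter] at hd
    obtain ⟨hd, h1d, hsq⟩ := hd
    congr 1
    rw [ArithmeticFunction.moebius_apply_of_squarefree hsq]
    rw [← (ArithmeticFunction.cardDistinctFactors_eq_cardFactors_iff_squarefree
      (by omega)).mpr hsq]
    rw [ArithmeticFunction.cardDistinctFactors_apply]
    rw [Nat.primeFactors, List.card_toFinset]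
    ring
  case hsub =>
    intro d hd
    simp only [Finset.mem_filter] at hd
    exact Finset.mem_erase.mpr ⟨by omega, hd.1⟩
  case hzero =>
    intro d hd hnd
    have hd1 : d ≠ 1 := (Finset.mem_erase.mp hd).1
    have hdm : d ∈ n.divisors := (Finset.mem_erase.mp hd).2
    have hnsq : ¬ Squarefree d := by
      intro hsq
      exact hnd (Finset.mem_filter.mpr ⟨hdm, Nat.lt_of_le_of_ne
        (Nat.pos_of_mem_divisors hdm) (Ne.symm hd1), hsq⟩)
    rw [ArithmeticFunction.moebius_eq_zero_of_not_squarefree hnsq]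
    simp
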